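/- Let f(w) = (1/n)∑ᵢ fᵢ(w) with each fᵢ convex differentiable with Lᵢ-Lipschitz gradient, let W ⊆ ℝ^d be convex, let w* minimize f over W, let p₁,…,pₙ ∈ (0,1) with ∑ pᵢ = 1 and L_P = maxᵢ [Lᵢ/(n pᵢ)]. Then for all w ∈ W: (1/n)∑ᵢ (1/(n pᵢ)) ‖∇fᵢ(w) − ∇fᵢ(w*)‖² ≤ 2 L_P (f(w) − f(w*)). -/

import Mathlib

open RealInnerProductSpace

section Aux
variable {E : Type*} [NormedAddCommGroup E] [InnerProductSpace ℝ E] [CompleteSpace E]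

lemma inner_gradient_eq (g : E → ℝ) (x v : E) (h : DifferentiableAt ℝ g x) :
    ⟪gradient g x, v⟫ = fderiv ℝ g x v := by
  rw [gradient, InnerProductSpace.toDual_symm_apply]

lemma hasDerivAt_line (g : E → ℝ) (h : Differentiable ℝ g) (x v : E) (t : ℝ) :
    HasDerivAt (fun s : ℝ => g (x + s • v)) (fderiv ℝ g (x + t • v) v) t := by
  have hc : HasDerivAt (fun s : ℝ => x + s • v) v t := by
    simpa using ((hasDerivAt_id t).smul_const v).const_add x
  exact ((h (x + t • v)).hasFDerivAt.comp_hasDerivAt t hc)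

lemma convex_grad_ineq (g : E → ℝ) (hconv : ConvexOn ℝ Set.univ g)
    (hdiff : Differentiable ℝ g) (x y : E) :
    g x + ⟪gradient g x, y - x⟫ ≤ g y := by
  set v := y - x with hv
  set φ : ℝ → ℝ := fun s => g (x + s • v) with hφ
  have hφc : ConvexOn ℝ Set.univ φ := by
    have := hconv.comp_affineMap (AffineMap.lineMap x y : ℝ →ᵃ[ℝ] E)
    have he : ∀ s : ℝ, (AffineMap.lineMap x y : ℝ →ᵃ[ℝ] E) s = x + s • v := fun s => by
      simp [AffineMap.lineMap_apply, hv]; module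
    convert this.subset (Set.subset_univ _) convex_univ using 1
    iterate 4 rfl
    funext s; simp [φ, Function.comp, he s]
  have hd0 : HasDerivAt φ (fderiv ℝ g x v) 0 := by
    simpa using hasDerivAt_line g hdiff x v 0
  have hs := hφc.le_slope_of_hasDerivAt (Set.mem_univ (0:ℝ)) (Set.mem_univ (1:ℝ)) one_pos hd0
  rw [slope_def_field] at hs
  have h0 : φ 0 = g x := by simp [φ]
  have h1 : φ 1 = g y := by simp [φ, hv]
  rw [inner_gradient_eq g x v (hdiff x)]
  simp [h0, h1] at hs
  linarith

lemma descent_lemma (g : E → ℝ) (hdiff : Differentiable ℝ g) (L : ℝ)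
    (hlip : ∀ a b, ‖gradient g a - gradient g b‖ ≤ L * ‖a - b‖) (x y : E) :
    g y ≤ g x + ⟪gradient g x, y - x⟫ + L / 2 * ‖y - x‖ ^ 2 := by
  set v := y - x with hv
  set h : ℝ → ℝ := fun s => g (x + s • v) - s * (fderiv ℝ g x v) - L / 2 * s ^ 2 * ‖v‖ ^ 2
    with hh
  have hder : ∀ t : ℝ, HasDerivAt h
      (fderiv ℝ g (x + t • v) v - fderiv ℝ g x v - L * t * ‖v‖ ^ 2) t := by
    intro t
    have h1 := hasDerivAt_line g hdiff x v t
    have h2 : HasDerivAt (fun s : ℝ => s * (fderiv ℝ g x v)) (fderiv ℝ g x v) t := by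
      simpa using (hasDerivAt_id t).mul_const (fderiv ℝ g x v)
    have h3 : HasDerivAt (fun s : ℝ => L / 2 * s ^ 2 * ‖v‖ ^ 2) (L * t * ‖v‖ ^ 2) t := by
      have : HasDerivAt (fun s : ℝ => s ^ 2) (2 * t) t := by
        simpa using hasDerivAt_pow 2 t
      convert ((this.const_mul (L / 2)).mul_const (‖v‖ ^ 2)) using 1
      iterate 2 rfl
      ring
    exact (h1.sub h2).sub h3
  have hanti : AntitoneOn h (Set.Icc (0:ℝ) 1) := by
    apply antitoneOn_of_deriv_nonpos (convex_Icc 0 1)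
    · exact (Differentiable.continuous fun t => (hder t).differentiableAt).continuousOn
    · intro t ht
      exact (hder t).differentiableAt.differentiableWithinAt
    · intro t ht
      rw [interior_Icc] at ht
      rw [(hder t).deriv]
      have key : fderiv ℝ g (x + t • v) v - fderiv ℝ g x v ≤ L * t * ‖v‖ ^ 2 := by
        have e1 : fderiv ℝ g (x + t • v) v - fderiv ℝ g x v
            = ⟪gradient g (x + t • v) - gradient g x, v⟫ := by
          rw [inner_sub_left, inner_gradient_eq g _ v (hdiff _),
            inner_gradient_eq g x v (hdiff x)]
        rw [e1]
        calc ⟪gradient g (x + t • v) - gradient g x, v⟫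
            ≤ ‖gradient g (x + t • v) - gradient g x‖ * ‖v‖ := real_inner_le_norm _ _
          _ ≤ (L * ‖(x + t • v) - x‖) * ‖v‖ := by
              gcongr; exact hlip _ _ -- careful: need L*‖·‖ ≥ ... mul_le_mul_of_nonneg_right
          _ = L * t * ‖v‖ ^ 2 := by
              rw [add_sub_cancel_left, norm_smul, Real.norm_eq_abs, abs_of_pos ht.1]; ring
      linarith
  have h10 : h 1 ≤ h 0 := hanti (by norm_num) (by norm_num) (by norm_num)
  have h0 : h 0 = g x := by simp [hh]
  have h1 : h 1 = g y - fderiv ℝ g x v - L / 2 * ‖v‖ ^ 2 := by simp [hh, hv]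
  rw [inner_gradient_eq g x v (hdiff x)]
  rw [h0, h1] at h10
  linarith

lemma cocoercivity (g : E → ℝ) (hconv : ConvexOn ℝ Set.univ g)
    (hdiff : Differentiable ℝ g) (L : ℝ) (hL0 : 0 ≤ L)
    (hlip : ∀ a b, ‖gradient g a - gradient g b‖ ≤ L * ‖a - b‖) (x y : E) :
    ‖gradient g x - gradient g y‖ ^ 2 ≤ 2 * L * (g x - g y - ⟪gradient g y, x - y⟫) := by
  rcases eq_or_lt_of_le hL0 with hL | hL
  · have h0 : ‖gradient g x - gradient g y‖ = 0 := by
      have h := hlip x y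
      rw [← hL, zero_mul] at h
      exact le_antisymm h (norm_nonneg _)
    rw [h0, ← hL]
    norm_num
  · set u := gradient g x - gradient g y with hu
    set z := x - L⁻¹ • u with hz
    have h1 : g y + ⟪gradient g y, z - y⟫ ≤ g z := convex_grad_ineq g hconv hdiff y z
    have h2 : g z ≤ g x + ⟪gradient g x, z - x⟫ + L / 2 * ‖z - x‖ ^ 2 :=
      descent_lemma g hdiff L hlip x z
    have e0 : z - x = -(L⁻¹ • u) := by rw [hz]; abel
    have e1 : ⟪gradient g x, z - x⟫ = -(L⁻¹ * ⟪gradient g x, u⟫) := by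
      rw [e0, inner_neg_right, real_inner_smul_right]
    have e2 : ⟪gradient g y, z - y⟫ = ⟪gradient g y, x - y⟫ - L⁻¹ * ⟪gradient g y, u⟫ := by
      have hzy : z - y = (x - y) - L⁻¹ • u := by rw [hz]; abel
      rw [hzy, inner_sub_right, real_inner_smul_right]
    have e3 : ‖z - x‖ ^ 2 = L⁻¹ ^ 2 * ‖u‖ ^ 2 := by
      rw [e0, norm_neg, norm_smul, Real.norm_eq_abs, mul_pow, sq_abs]
    have e4 : ⟪gradient g x, u⟫ - ⟪gradient g y, u⟫ = ‖u‖ ^ 2 := by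
      rw [← inner_sub_left, ← hu, real_inner_self_eq_norm_sq]
    have hLi : L * L⁻¹ = 1 := mul_inv_cancel₀ (ne_of_gt hL)
    have e4' : L⁻¹ * ⟪gradient g x, u⟫ - L⁻¹ * ⟪gradient g y, u⟫ = L⁻¹ * ‖u‖ ^ 2 := by
      rw [← mul_sub, e4]
    have c1 : L / 2 * (L⁻¹ ^ 2 * ‖u‖ ^ 2) = 1 / 2 * (L⁻¹ * ‖u‖ ^ 2) := by
      have h : L / 2 * (L⁻¹ ^ 2 * ‖u‖ ^ 2) = 1 / 2 * (L⁻¹ * ‖u‖ ^ 2) * (L * L⁻¹) := by ring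
      rw [h, hLi, mul_one]
    rw [e1, e3, c1] at h2
    rw [e2] at h1
    have half : 1 / 2 * (L⁻¹ * ‖u‖ ^ 2) ≤ g x - g y - ⟪gradient g y, x - y⟫ := by linarith
    have hmul := mul_le_mul_of_nonneg_left half hL.le
    have c2 : L * (1 / 2 * (L⁻¹ * ‖u‖ ^ 2)) = 1 / 2 * ‖u‖ ^ 2 := by
      have h : L * (1 / 2 * (L⁻¹ * ‖u‖ ^ 2)) = 1 / 2 * ‖u‖ ^ 2 * (L * L⁻¹) := by ring
      rw [h, hLi, mul_one]
    rw [c2] at hmul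
    linarith

end Aux

/-- For `f = (1/n)∑ᵢ fᵢ` (each `fᵢ` convex differentiable with `Lᵢ`-Lipschitz
gradient), `W` convex, `w*` a minimizer of `f` over `W`, probability weights `pᵢ` and
`L_P = maxᵢ Lᵢ/(n pᵢ)`, for all `w ∈ W`:
`(1/n)∑ᵢ (1/(n pᵢ)) ‖∇fᵢ(w) − ∇fᵢ(w*)‖² ≤ 2 L_P (f(w) − f(w*))`. -/
theorem stmt_5 (d n : ℕ) (hn : 0 < n)
    (fi : Fin n → EuclideanSpace ℝ (Fin d) → ℝ) (Li p : Fin n → ℝ)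
    (hconv : ∀ i, ConvexOn ℝ Set.univ (fi i)) (hdiff : ∀ i, Differentiable ℝ (fi i))
    (hlip : ∀ i, ∀ x y, ‖gradient (fi i) x - gradient (fi i) y‖ ≤ Li i * ‖x - y‖)
    (f : EuclideanSpace ℝ (Fin d) → ℝ)
    (hf : ∀ w, f w = (1 / (n : ℝ)) * ∑ i, fi i w)
    (W : Set (EuclideanSpace ℝ (Fin d))) (hW : Convex ℝ W)
    (wstar : EuclideanSpace ℝ (Fin d)) (hws : wstar ∈ W)
    (hmin : ∀ w ∈ W, f wstar ≤ f w)
    (hp : ∀ i, p i ∈ Set.Ioo (0 : ℝ) 1) (hsum : ∑ i, p i = 1)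
    (LP : ℝ) (hLP : IsGreatest {x : ℝ | ∃ i, x = Li i / ((n : ℝ) * p i)} LP) :
    ∀ w ∈ W, (1 / (n : ℝ)) * ∑ i, (1 / ((n : ℝ) * p i)) *
        ‖gradient (fi i) w - gradient (fi i) wstar‖ ^ 2
      ≤ 2 * LP * (f w - f wstar) := by
  intro w hw
  rcases Nat.eq_zero_or_pos d with hd | hd
  · subst hd
    have hww : w = wstar := Subsingleton.elim w wstar
    simp [hww]
  · -- d > 0
    have hLnn : ∀ i, 0 ≤ Li i := by
      intro i
      have h := hlip i (EuclideanSpace.single (⟨0, hd⟩ : Fin d) (1 : ℝ)) 0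
      have hn1 : ‖EuclideanSpace.single (⟨0, hd⟩ : Fin d) (1 : ℝ) - 0‖ = 1 := by
        simp [EuclideanSpace.norm_single]
      rw [hn1, mul_one] at h
      exact le_trans (norm_nonneg _) h
    have hnp : ∀ i, 0 < (n : ℝ) * p i := fun i =>
      mul_pos (by exact_mod_cast hn) (hp i).1
    have hLPub : ∀ i, Li i / ((n : ℝ) * p i) ≤ LP := fun i => hLP.2 ⟨i, rfl⟩
    have hLPnn : 0 ≤ LP := by
      obtain ⟨i, hi⟩ := hLP.1
      rw [hi]
      exact div_nonneg (hLnn i) (hnp i).le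
    set v := w - wstar with hv
    have hB : ∀ i, 0 ≤ fi i w - fi i wstar - ⟪gradient (fi i) wstar, v⟫ := by
      intro i
      have h := convex_grad_ineq (fi i) (hconv i) (hdiff i) wstar w
      rw [← hv] at h
      linarith
    set S := ∑ i, ⟪gradient (fi i) wstar, v⟫ with hSdef
    have hS : 0 ≤ S := by
      set C := (∑ i, Li i) * (‖v‖ ^ 2 / 2) with hC
      have hCnn : 0 ≤ C := by
        apply mul_nonneg (Finset.sum_nonneg fun i _ => hLnn i)
        positivity
      have key : ∀ t : ℝ, 0 < t → t ≤ 1 → 0 ≤ t * S + t ^ 2 * C := by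
        intro t ht0 ht1
        have hmem : wstar + t • v ∈ W := by
          have h := hW hws hw (by linarith : (0:ℝ) ≤ 1 - t) ht0.le (by ring)
          convert h using 1
          rw [hv]; module
        have hi : ∀ i, fi i (wstar + t • v) ≤
            fi i wstar + t * ⟪gradient (fi i) wstar, v⟫ + t ^ 2 * ‖v‖ ^ 2 / 2 * Li i := by
          intro i
          have h := descent_lemma (fi i) (hdiff i) (Li i) (hlip i) wstar (wstar + t • v)
          rw [add_sub_cancel_left, real_inner_smul_right, norm_smul, Real.norm_eq_abs,
            mul_pow, sq_abs] at h
          linarith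
        have hsum1 : ∑ i, fi i (wstar + t • v) ≤
            ∑ i, (fi i wstar + t * ⟪gradient (fi i) wstar, v⟫ + t ^ 2 * ‖v‖ ^ 2 / 2 * Li i) :=
          Finset.sum_le_sum fun i _ => hi i
        have hsum2 : ∑ i, (fi i wstar + t * ⟪gradient (fi i) wstar, v⟫
              + t ^ 2 * ‖v‖ ^ 2 / 2 * Li i)
            = ∑ i, fi i wstar + t * S + t ^ 2 * C := by
          rw [Finset.sum_add_distrib, Finset.sum_add_distrib, ← Finset.mul_sum,
            ← Finset.mul_sum, hSdef, hC]
          ring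
        have h1 : f wstar ≤ f (wstar + t • v) := hmin _ hmem
        rw [hf, hf] at h1
        have hnpos : (0 : ℝ) < 1 / n := by positivity
        have h2 : ∑ i, fi i wstar ≤ ∑ i, fi i (wstar + t • v) :=
          (mul_le_mul_iff_right₀ hnpos).mp h1
        linarith [hsum1.trans_eq hsum2]
      by_contra hneg
      push_neg at hneg
      set t := min 1 ((-S) / (C + 1)) with htdef
      have hC1 : (0 : ℝ) < C + 1 := by linarith
      have ht0 : 0 < t := lt_min one_pos (div_pos (neg_pos.mpr hneg) hC1)
      have ht1 : t ≤ 1 := min_le_left _ _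
      have htC : t * (C + 1) ≤ -S := (le_div_iff₀ hC1).mp (min_le_right _ _)
      have hS2 : S + t * C ≤ -t := by nlinarith
      have hk := key t ht0 ht1
      nlinarith [mul_le_mul_of_nonneg_left hS2 ht0.le]
    have hper : ∀ i, (1 / ((n : ℝ) * p i)) * ‖gradient (fi i) w - gradient (fi i) wstar‖ ^ 2
        ≤ 2 * LP * (fi i w - fi i wstar - ⟪gradient (fi i) wstar, v⟫) := by
      intro i
      have hc := cocoercivity (fi i) (hconv i) (hdiff i) (Li i) (hLnn i) (hlip i) w wstar
      rw [← hv] at hc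
      have hBi := hB i
      have h1 : (1 / ((n : ℝ) * p i)) * ‖gradient (fi i) w - gradient (fi i) wstar‖ ^ 2
          ≤ (1 / ((n : ℝ) * p i)) * (2 * Li i
            * (fi i w - fi i wstar - ⟪gradient (fi i) wstar, v⟫)) :=
        mul_le_mul_of_nonneg_left hc (one_div_pos.mpr (hnp i)).le
      have h2 : (1 / ((n : ℝ) * p i)) * (2 * Li i
            * (fi i w - fi i wstar - ⟪gradient (fi i) wstar, v⟫))
          = 2 * (Li i / ((n : ℝ) * p i))
            * (fi i w - fi i wstar - ⟪gradient (fi i) wstar, v⟫) := by ring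
      have h3 : 2 * (Li i / ((n : ℝ) * p i))
            * (fi i w - fi i wstar - ⟪gradient (fi i) wstar, v⟫)
          ≤ 2 * LP * (fi i w - fi i wstar - ⟪gradient (fi i) wstar, v⟫) :=
        mul_le_mul_of_nonneg_right (by linarith [hLPub i]) hBi
      linarith
    have hsum2 : ∑ i, (1 / ((n : ℝ) * p i)) * ‖gradient (fi i) w - gradient (fi i) wstar‖ ^ 2
        ≤ ∑ i, 2 * LP * (fi i w - fi i wstar - ⟪gradient (fi i) wstar, v⟫) :=
      Finset.sum_le_sum fun i _ => hper i
    have hsum3 : ∑ i, 2 * LP * (fi i w - fi i wstar - ⟪gradient (fi i) wstar, v⟫)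
        = 2 * LP * ((∑ i, fi i w) - (∑ i, fi i wstar) - S) := by
      rw [← Finset.mul_sum, Finset.sum_sub_distrib, Finset.sum_sub_distrib, hSdef]
    rw [hf, hf]
    have hnpos : (0 : ℝ) ≤ 1 / n := by positivity
    have hfinal := mul_le_mul_of_nonneg_left (hsum2.trans_eq hsum3) hnpos
    have hLS : 0 ≤ 1 / (n : ℝ) * (2 * LP * S) :=
      mul_nonneg (by positivity) (mul_nonneg (by linarith) hS)
    nlinarith [hfinal, hLS]
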